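/- Let r ≥ 1 and define b : ℂʳ × ℝʳ → ℂ by b(z,x) = exp(−(1/2)(τ(x²) + τ(z²)) + √2·τ(zx)), where τ(z²) = Σ_{i=1}^r z_i², τ(x²) = Σ_{i=1}^r x_i², τ(zx) = Σ_{i=1}^r z_i x_i. Then b satisfies the intertwining differential equation −Σ_{i=1}^r ∂²b/∂z_i²(z,x) = (r/2)·b(z,x) + Σ_{i=1}^r x_i·∂b/∂x_i(z,x) − (1/2)·Σ_{i=1}^r ∂²b/∂x_i²(z,x) − (1/2)·τ(x²)·b(z,x) for all z ∈ ℂʳ, x ∈ ℝʳ; both sides equal (r − 2τ(x²) − τ(z²) + 2√2·τ(zx))·b(z,x). -/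

import Mathlib

/-- The Bargmann kernel `b(z,x) = exp(−(1/2)(τ(x²)+τ(z²)) + √2·τ(zx))`. -/
noncomputable def bker (r : ℕ) (z : Fin r → ℂ) (x : Fin r → ℝ) : ℂ :=
  Complex.exp (-(1/2 : ℂ) * ((∑ i, (x i : ℂ) ^ 2) + ∑ i, z i ^ 2) +
    (Real.sqrt 2 : ℂ) * ∑ i, z i * (x i : ℂ))

lemma cexp_quad_hasDerivAt (a q c w : ℂ) :
    HasDerivAt (fun w : ℂ => Complex.exp (a + q * w + c * w ^ 2))
      ((q + 2 * c * w) * Complex.exp (a + q * w + c * w ^ 2)) w := by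
  have h : HasDerivAt (fun w : ℂ => a + q * w + c * w ^ 2) (q + 2 * c * w) w := by
    have := (((hasDerivAt_id w).const_mul q).const_add a).add ((hasDerivAt_pow 2 w).const_mul c)
    refine this.congr_deriv ?_
    norm_num
    ring
  simpa [mul_comm] using h.cexp

lemma cexp_quad_deriv2 (a q c w : ℂ) :
    deriv (deriv (fun w : ℂ => Complex.exp (a + q * w + c * w ^ 2))) w
      = (2 * c + (q + 2 * c * w) ^ 2) * Complex.exp (a + q * w + c * w ^ 2) := by
  have hd : deriv (fun w : ℂ => Complex.exp (a + q * w + c * w ^ 2))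
      = fun w => (q + 2 * c * w) * Complex.exp (a + q * w + c * w ^ 2) :=
    funext fun w => (cexp_quad_hasDerivAt a q c w).deriv
  rw [hd]
  have h1 : HasDerivAt (fun w : ℂ => q + 2 * c * w) (2 * c) w := by
    simpa using ((hasDerivAt_id w).const_mul (2 * c)).const_add q
  have h2 := h1.mul (cexp_quad_hasDerivAt a q c w)
  exact h2.deriv.trans (by ring)

lemma rexp_quad_hasDerivAt (a q c : ℂ) (w : ℝ) :
    HasDerivAt (fun w : ℝ => Complex.exp (a + q * (w : ℂ) + c * (w : ℂ) ^ 2))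
      ((q + 2 * c * w) * Complex.exp (a + q * w + c * (w : ℂ) ^ 2)) w := by
  have hw : HasDerivAt (fun t : ℝ => (t : ℂ)) 1 w := by
    simpa using (hasDerivAt_id w).ofReal_comp
  have h : HasDerivAt (fun t : ℝ => a + q * (t : ℂ) + c * (t : ℂ) ^ 2) (q + 2 * c * w) w := by
    have h2 : HasDerivAt (fun t : ℝ => (t : ℂ) ^ 2) (2 * (w : ℂ)) w := by
      have heq : (fun t : ℝ => (t : ℂ) ^ 2) = fun t : ℝ => (t : ℂ) * (t : ℂ) :=
        funext fun t => by ring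
      rw [heq]
      refine (hw.mul hw).congr_deriv ?_
      ring
    have := ((hw.const_mul q).const_add a).add (h2.const_mul c)
    refine this.congr_deriv ?_
    norm_num
    ring
  simpa [mul_comm] using h.cexp

lemma rexp_quad_deriv2 (a q c : ℂ) (w : ℝ) :
    deriv (deriv (fun w : ℝ => Complex.exp (a + q * (w : ℂ) + c * (w : ℂ) ^ 2))) w
      = (2 * c + (q + 2 * c * w) ^ 2) * Complex.exp (a + q * w + c * (w : ℂ) ^ 2) := by
  have hd : deriv (fun w : ℝ => Complex.exp (a + q * (w : ℂ) + c * (w : ℂ) ^ 2))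
      = fun w : ℝ => (q + 2 * c * (w : ℂ)) * Complex.exp (a + q * w + c * (w : ℂ) ^ 2) :=
    funext fun w => (rexp_quad_hasDerivAt a q c w).deriv
  rw [hd]
  have h1 : HasDerivAt (fun w : ℝ => q + 2 * c * (w : ℂ)) (2 * c) w := by
    have hw : HasDerivAt (fun t : ℝ => (t : ℂ)) 1 w := by
      simpa using (hasDerivAt_id w).ofReal_comp
    simpa using (hw.const_mul (2 * c)).const_add q
  have h2 := h1.mul (rexp_quad_hasDerivAt a q c w)
  exact h2.deriv.trans (by ring)

lemma sum_comp_update {r : ℕ} {γ : Type*} (z : Fin r → γ) (i : Fin r) (w : γ)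
    (g : Fin r → γ → ℂ) :
    ∑ j, g j (Function.update z i w j) = (∑ j, g j (z j)) - g i (z i) + g i w := by
  classical
  calc ∑ j, g j (Function.update z i w j)
      = ∑ j, Function.update (fun j => g j (z j)) i (g i w) j :=
        Finset.sum_congr rfl fun j _ => Function.apply_update g z i w j
    _ = g i w + ∑ j ∈ Finset.univ \ {i}, g j (z j) :=
        Finset.sum_update_of_mem (Finset.mem_univ i) (fun j => g j (z j)) (g i w)
    _ = (∑ j, g j (z j)) - g i (z i) + g i w := by
        rw [Finset.sdiff_singleton_eq_erase, Finset.sum_erase_eq_sub (Finset.mem_univ i)]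
        ring

/-- the Bargmann kernel satisfies the intertwining differential equation
`−Σᵢ ∂²b/∂z_i² = (r/2)·b + Σᵢ x_i·∂b/∂x_i − (1/2)·Σᵢ ∂²b/∂x_i² − (1/2)·τ(x²)·b`,
both sides being equal to `(r − 2τ(x²) − τ(z²) + 2√2·τ(zx))·b`. -/
theorem bargmann_kernel_intertwining (r : ℕ) (hr : 1 ≤ r)
    (z : Fin r → ℂ) (x : Fin r → ℝ) :
    (-∑ i, deriv (deriv (fun w => bker r (Function.update z i w) x)) (z i) =
      ((r : ℂ) / 2) * bker r z x +
        ∑ i, (x i : ℂ) * deriv (fun w : ℝ => bker r z (Function.update x i w)) (x i) -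
        (1/2 : ℂ) * ∑ i, deriv (deriv (fun w : ℝ => bker r z (Function.update x i w))) (x i) -
        (1/2 : ℂ) * (∑ i, (x i : ℂ) ^ 2) * bker r z x) ∧
    -∑ i, deriv (deriv (fun w => bker r (Function.update z i w) x)) (z i) =
      ((r : ℂ) - 2 * ∑ i, (x i : ℂ) ^ 2 - ∑ i, z i ^ 2 +
        2 * (Real.sqrt 2 : ℂ) * ∑ i, z i * (x i : ℂ)) * bker r z x := by
  classical
  set s : ℂ := (Real.sqrt 2 : ℂ) with hs_def
  have hs : s ^ 2 = 2 := by
    rw [hs_def]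
    norm_cast
    exact Real.sq_sqrt (by norm_num)
  set X : ℂ := ∑ i, (x i : ℂ) ^ 2 with hX
  set Z : ℂ := ∑ i, z i ^ 2 with hZ
  set W : ℂ := ∑ i, z i * (x i : ℂ) with hW
  set b : ℂ := bker r z x with hb
  have hbval : b = Complex.exp (-(1/2 : ℂ) * (X + Z) + s * W) := rfl
  -- second z-derivative
  have hz2 : ∀ i, deriv (deriv (fun w => bker r (Function.update z i w) x)) (z i)
      = (-1 + (s * (x i : ℂ) - z i) ^ 2) * b := by
    intro i
    have hfun : (fun w => bker r (Function.update z i w) x)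
        = fun w : ℂ => Complex.exp ((-(1/2 : ℂ) * (X + (Z - z i ^ 2)) + s * (W - z i * (x i : ℂ)))
            + (s * (x i : ℂ)) * w + (-(1/2 : ℂ)) * w ^ 2) := by
      funext w
      unfold bker
      rw [sum_comp_update z i w (fun j v => v ^ 2),
        sum_comp_update z i w (fun j v => v * ((x j : ℝ) : ℂ))]
      congr 1
      rw [hX, hZ, hW]
      ring
    rw [hfun, cexp_quad_deriv2, hbval]
    congr 1
    · ring
    · congr 1
      ring
  -- first x-derivative
  have hx1 : ∀ i, deriv (fun w : ℝ => bker r z (Function.update x i w)) (x i)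
      = (s * z i - (x i : ℂ)) * b := by
    intro i
    have hfun : (fun w : ℝ => bker r z (Function.update x i w))
        = fun w : ℝ => Complex.exp ((-(1/2 : ℂ) * ((X - (x i : ℂ) ^ 2) + Z) + s * (W - z i * (x i : ℂ)))
            + (s * z i) * (w : ℂ) + (-(1/2 : ℂ)) * (w : ℂ) ^ 2) := by
      funext w
      unfold bker
      rw [sum_comp_update x i w (fun j v => ((v : ℝ) : ℂ) ^ 2),
        sum_comp_update x i w (fun j v => z j * ((v : ℝ) : ℂ))]
      congr 1
      rw [hX, hZ, hW]
      ring
    rw [hfun, (rexp_quad_hasDerivAt _ _ _ (x i)).deriv, hbval]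
    congr 1
    · ring
    · congr 1
      ring
  -- second x-derivative
  have hx2 : ∀ i, deriv (deriv (fun w : ℝ => bker r z (Function.update x i w))) (x i)
      = (-1 + (s * z i - (x i : ℂ)) ^ 2) * b := by
    intro i
    have hfun : (fun w : ℝ => bker r z (Function.update x i w))
        = fun w : ℝ => Complex.exp ((-(1/2 : ℂ) * ((X - (x i : ℂ) ^ 2) + Z) + s * (W - z i * (x i : ℂ)))
            + (s * z i) * (w : ℂ) + (-(1/2 : ℂ)) * (w : ℂ) ^ 2) := by
      funext w
      unfold bker
      rw [sum_comp_update x i w (fun j v => ((v : ℝ) : ℂ) ^ 2),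
        sum_comp_update x i w (fun j v => z j * ((v : ℝ) : ℂ))]
      congr 1
      rw [hX, hZ, hW]
      ring
    rw [hfun, rexp_quad_deriv2, hbval]
    congr 1
    · ring
    · congr 1
      ring
  -- claim 2
  have key2 : -∑ i, deriv (deriv (fun w => bker r (Function.update z i w) x)) (z i)
      = ((r : ℂ) - 2 * X - Z + 2 * s * W) * b := by
    simp only [hz2]
    rw [← Finset.sum_mul, ← neg_mul]
    congr 1
    have hterm : ∀ i ∈ Finset.univ, (-1 + (s * (x i : ℂ) - z i) ^ 2)
        = -1 + (2 * (x i : ℂ) ^ 2 - 2 * s * (z i * (x i : ℂ)) + z i ^ 2) := fun i _ => by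
      linear_combination ((x i : ℂ) ^ 2) * hs
    rw [Finset.sum_congr rfl hterm, Finset.sum_add_distrib, Finset.sum_add_distrib,
      Finset.sum_sub_distrib, ← Finset.mul_sum, ← Finset.mul_sum, ← hX, ← hZ, ← hW,
      Finset.sum_const, Finset.card_univ, Fintype.card_fin, nsmul_eq_mul]
    ring
  refine ⟨?_, key2⟩
  rw [key2]
  simp only [hx1, hx2]
  have hA : ∑ i, (x i : ℂ) * ((s * z i - (x i : ℂ)) * b) = (s * W - X) * b := by
    have hterm : ∀ i ∈ Finset.univ, (x i : ℂ) * ((s * z i - (x i : ℂ)) * b)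
        = (s * (z i * (x i : ℂ)) - (x i : ℂ) ^ 2) * b := fun i _ => by ring
    rw [Finset.sum_congr rfl hterm, ← Finset.sum_mul]
    congr 1
    rw [Finset.sum_sub_distrib, ← Finset.mul_sum, ← hX, ← hW]
  have hB : ∑ i, (-1 + (s * z i - (x i : ℂ)) ^ 2) * b = (-(r : ℂ) + (2 * Z - 2 * s * W + X)) * b := by
    rw [← Finset.sum_mul]
    congr 1
    have hterm : ∀ i ∈ Finset.univ, (-1 + (s * z i - (x i : ℂ)) ^ 2)
        = -1 + (2 * z i ^ 2 - 2 * s * (z i * (x i : ℂ)) + (x i : ℂ) ^ 2) := fun i _ => by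
      linear_combination (z i ^ 2) * hs
    rw [Finset.sum_congr rfl hterm, Finset.sum_add_distrib, Finset.sum_add_distrib,
      Finset.sum_sub_distrib, ← Finset.mul_sum, ← Finset.mul_sum, ← hX, ← hZ, ← hW,
      Finset.sum_const, Finset.card_univ, Fintype.card_fin, nsmul_eq_mul]
    ring
  rw [hA, hB]
  ring
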